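/- In any n-player resource allocation model whose cost functions C^r are nondecreasing (C^r(T) ≤ C^r(U) whenever T ⊆ U) with C^r(∅) = 0, every strategy vector P satisfies Φ(P) ≤ H_n · C(P), where Φ(P) = Σ_{r ∈ R} Σ_{∅ ≠ T ⊆ P^r} ((|P^r| − |T|)! (|T| − 1)! / |P^r|!) · C^r(T) is the Shapley potential, C(P) = Σ_{r ∈ R} C^r(P^r) is the social cost, and H_n = Σ_{l=1}^{n} 1/l. -/

import Mathlib

open Finset

def preSet {N : Type*} [DecidableEq N] (S : Finset N)
    (π : {x // x ∈ S} ≃ Fin S.card) (i : {x // x ∈ S}) : Finset N :=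
  (S.attach.filter (fun j => π j < π i)).image Subtype.val

noncomputable def shapley {N : Type*} [DecidableEq N]
    (C : Finset N → ℝ) (S : Finset N) (i : N) : ℝ :=
  if hi : i ∈ S then
    (1 / (Nat.factorial S.card : ℝ)) *
      ∑ π : {x // x ∈ S} ≃ Fin S.card,
        (C (preSet S π ⟨i, hi⟩ ∪ {i}) - C (preSet S π ⟨i, hi⟩))
  else 0

/-- `users P r = P^r = {i : r ∈ P_i}`, the set of players using resource `r`. -/
def users {n : ℕ} {R : Type*} [DecidableEq R]
    (P : Fin n → Finset R) (r : R) : Finset (Fin n) :=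
  Finset.univ.filter (fun i => r ∈ P i)

/-- The private cost of player `i` under Shapley cost sharing:
`C_i(P) = Σ_{r ∈ P_i} φ_i(C^r, P^r)`. -/
noncomputable def privCost {n : ℕ} {R : Type*} [DecidableEq R]
    (Cr : R → Finset (Fin n) → ℝ) (P : Fin n → Finset R) (i : Fin n) : ℝ :=
  ∑ r ∈ P i, shapley (Cr r) (users P r) i

/-- The social cost `C(P) = Σ_{r ∈ R} C^r(P^r)`. -/
noncomputable def socCost {n : ℕ} {R : Type*} [Fintype R] [DecidableEq R]
    (Cr : R → Finset (Fin n) → ℝ) (P : Fin n → Finset R) : ℝ :=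
  ∑ r : R, Cr r (users P r)

/-- The Shapley potential
`Φ(P) = Σ_{r ∈ R} Σ_{∅ ≠ T ⊆ P^r} ((|P^r|-|T|)!(|T|-1)!/|P^r|!) · C^r(T)`. -/
noncomputable def pot {n : ℕ} {R : Type*} [Fintype R] [DecidableEq R]
    (Cr : R → Finset (Fin n) → ℝ) (P : Fin n → Finset R) : ℝ :=
  ∑ r : R, ∑ T ∈ (users P r).powerset.filter (fun T => T.Nonempty),
    ((Nat.factorial ((users P r).card - T.card) : ℝ) *
        (Nat.factorial (T.card - 1) : ℝ) / (Nat.factorial (users P r).card : ℝ)) *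
      Cr r T

/-- `P` is a pure Nash equilibrium of the Shapley cost sharing game. -/
def isPNE {n : ℕ} {R : Type*} [DecidableEq R]
    (Strat : Fin n → Set (Finset R)) (Cr : R → Finset (Fin n) → ℝ)
    (P : Fin n → Finset R) : Prop :=
  (∀ i, P i ∈ Strat i) ∧
    ∀ i, ∀ Q ∈ Strat i, privCost Cr P i ≤ privCost Cr (Function.update P i Q) i

/-- `H_k`, the `k`-th harmonicNum number. -/
noncomputable def harmonicNum (k : ℕ) : ℝ := ∑ l ∈ Finset.Icc 1 k, (1 / (l : ℝ))

lemma harmonicNum_nonneg (k : ℕ) : 0 ≤ harmonicNum k := by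
  unfold harmonicNum
  exact Finset.sum_nonneg fun l _ => by positivity

lemma harmonicNum_mono {k m : ℕ} (h : k ≤ m) : harmonicNum k ≤ harmonicNum m := by
  unfold harmonicNum
  exact Finset.sum_le_sum_of_subset_of_nonneg (Finset.Icc_subset_Icc_right h)
    (fun l _ _ => by positivity)

lemma weight_sum {α : Type*} [DecidableEq α] (S : Finset α) :
    ∑ T ∈ S.powerset.filter (fun T => T.Nonempty),
      ((Nat.factorial (S.card - T.card) : ℝ) * (Nat.factorial (T.card - 1) : ℝ) /
        (Nat.factorial S.card : ℝ)) = harmonicNum S.card := by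
  have hsplit : S.powerset = insert ∅ (S.powerset.filter (fun T => T.Nonempty)) := by
    ext T
    simp only [Finset.mem_insert, Finset.mem_filter, Finset.mem_powerset]
    constructor
    · intro h
      rcases T.eq_empty_or_nonempty with h0 | h0
      · exact Or.inl h0
      · exact Or.inr ⟨h, h0⟩
    · rintro (rfl | ⟨h, _⟩)
      · exact Finset.empty_subset _
      · exact h
  have hnm : ∅ ∉ S.powerset.filter (fun T => T.Nonempty) := by simp
  have hfull : ∑ T ∈ S.powerset,
      ((Nat.factorial (S.card - T.card) : ℝ) * (Nat.factorial (T.card - 1) : ℝ) /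
        (Nat.factorial S.card : ℝ)) = 1 + harmonicNum S.card := by
    rw [Finset.sum_powerset]
    have hterm : ∀ j ∈ Finset.range (S.card + 1),
        (∑ T ∈ Finset.powersetCard j S,
          ((Nat.factorial (S.card - T.card) : ℝ) * (Nat.factorial (T.card - 1) : ℝ) /
            (Nat.factorial S.card : ℝ))) =
        (S.card.choose j : ℝ) * ((Nat.factorial (S.card - j) : ℝ) *
          (Nat.factorial (j - 1) : ℝ) / (Nat.factorial S.card : ℝ)) := by
      intro j hj
      rw [Finset.sum_congr rfl (fun T hT => by
        rw [(Finset.mem_powersetCard.mp hT).2]), Finset.sum_const,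
        Finset.card_powersetCard, nsmul_eq_mul]
    rw [Finset.sum_congr rfl hterm]
    have h01 : Finset.range (S.card + 1) = insert 0 (Finset.Icc 1 S.card) := by
      ext k
      simp only [Finset.mem_range, Finset.mem_insert, Finset.mem_Icc]
      omega
    rw [h01, Finset.sum_insert (by simp)]
    simp only [Nat.choose_zero_right, Nat.sub_zero, Nat.zero_sub, Nat.factorial_zero]
    have hfac : (Nat.factorial S.card : ℝ) ≠ 0 := by positivity
    rw [Nat.cast_one, one_mul, mul_one, div_self hfac]
    congr 1
    unfold harmonicNum
    refine Finset.sum_congr rfl ?_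
    intro j hj
    rw [Finset.mem_Icc] at hj
    have hj1 : 1 ≤ j := hj.1
    have hjs : j ≤ S.card := hj.2
    have hid : S.card.choose j * Nat.factorial j * Nat.factorial (S.card - j) =
        Nat.factorial S.card := Nat.choose_mul_factorial_mul_factorial hjs
    have hjfac : Nat.factorial j = j * Nat.factorial (j - 1) :=
      (Nat.mul_factorial_pred (by omega)).symm
    have hidR : (S.card.choose j : ℝ) * j * (Nat.factorial (j-1) : ℝ) *
        (Nat.factorial (S.card - j) : ℝ) = (Nat.factorial S.card : ℝ) := by
      rw [hjfac] at hid
      push_cast [← hid]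
      ring
    have hjne : (j : ℝ) ≠ 0 := by positivity
    field_simp
    nlinarith [hidR]
  have := hfull
  rw [hsplit, Finset.sum_insert hnm] at this
  simp only [Finset.card_empty, Nat.sub_zero, Nat.zero_sub, Nat.factorial_zero,
    Nat.cast_one, one_mul, mul_one] at this
  have hfac : (Nat.factorial S.card : ℝ) ≠ 0 := by positivity
  rw [div_self hfac] at this
  linarith

/-- The Shapley potential is at most `H_n` times the social cost. -/
theorem pot_le_harmonic_mul_socCost {n : ℕ} {R : Type*} [Fintype R] [DecidableEq R]
    (Strat : Fin n → Set (Finset R)) (Cr : R → Finset (Fin n) → ℝ)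
    (hC0 : ∀ r, Cr r ∅ = 0)
    (hmono : ∀ r (T U : Finset (Fin n)), T ⊆ U → Cr r T ≤ Cr r U)
    (P : Fin n → Finset R) (hP : ∀ i, P i ∈ Strat i) :
    pot Cr P ≤ harmonicNum n * socCost Cr P := by
  unfold pot socCost
  rw [Finset.mul_sum]
  refine Finset.sum_le_sum fun r _ => ?_
  set S := users P r with hS
  have hCS : 0 ≤ Cr r S := by
    have := hmono r ∅ S (Finset.empty_subset _)
    rw [hC0 r] at this; exact this
  calc ∑ T ∈ S.powerset.filter (fun T => T.Nonempty),
        ((Nat.factorial (S.card - T.card) : ℝ) * (Nat.factorial (T.card - 1) : ℝ) /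
          (Nat.factorial S.card : ℝ)) * Cr r T
      ≤ ∑ T ∈ S.powerset.filter (fun T => T.Nonempty),
        ((Nat.factorial (S.card - T.card) : ℝ) * (Nat.factorial (T.card - 1) : ℝ) /
          (Nat.factorial S.card : ℝ)) * Cr r S := by
        refine Finset.sum_le_sum fun T hT => ?_
        have hTS : T ⊆ S := Finset.mem_powerset.mp (Finset.mem_filter.mp hT).1
        exact mul_le_mul_of_nonneg_left (hmono r T S hTS) (by positivity)
    _ = harmonicNum S.card * Cr r S := by rw [← Finset.sum_mul, weight_sum]
    _ ≤ harmonicNum n * Cr r S := by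
        refine mul_le_mul_of_nonneg_right (harmonicNum_mono ?_) hCS
        calc S.card ≤ Fintype.card (Fin n) := Finset.card_le_univ S
          _ = n := Fintype.card_fin n
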